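/- Let α > 0 with α ≠ 1, and let ρ and σ be density matrices on ℂ^n with σ positive definite. Define the escort matrices ρ^{(α)} = ρ^α / Tr(ρ^α) and σ^{(α)} = σ^α / Tr(σ^α), which are again density matrices. Then the quantum relative α-entropy equals the Petz–Rényi relative entropy of order 1/α of the escort matrices: S_α(ρ‖σ) = D̂_{1/α}(ρ^{(α)} ‖ σ^{(α)}). -/

import Mathlib

open Matrix ComplexOrder

/-- Real power of a Hermitian matrix via its spectral decomposition:
`A ^ r = ∑ i, (λ i) ^ r |x i⟩⟨x i|` (and `0` if `A` is not Hermitian). -/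
noncomputable def mRpow {m : Type*} [Fintype m] [DecidableEq m]
    (A : Matrix m m ℂ) (r : ℝ) : Matrix m m ℂ :=
  if hA : A.IsHermitian then
    (hA.eigenvectorUnitary : Matrix m m ℂ) *
      Matrix.diagonal (fun i => ((hA.eigenvalues i ^ r : ℝ) : ℂ)) *
      star (hA.eigenvectorUnitary : Matrix m m ℂ)
  else 0

/-- The quantum relative α-entropy
`S_α(ρ‖σ) = (α/(1−α))·log Tr(ρ σ^{α−1}) − (1/(1−α))·log Tr(ρ^α) + log Tr(σ^α)`. -/
noncomputable def Salpha {m : Type*} [Fintype m] [DecidableEq m]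
    (α : ℝ) (ρ σ : Matrix m m ℂ) : ℝ :=
  α / (1 - α) * Real.log ((ρ * mRpow σ (α - 1)).trace.re)
    - 1 / (1 - α) * Real.log ((mRpow ρ α).trace.re)
    + Real.log ((mRpow σ α).trace.re)

/-- The Petz–Rényi β-relative entropy `D̂_β(ρ‖σ) = (1/(β−1))·log Tr(ρ^β σ^{1−β})`. -/
noncomputable def petzRenyi {m : Type*} [Fintype m] [DecidableEq m]
    (β : ℝ) (ρ σ : Matrix m m ℂ) : ℝ :=
  1 / (β - 1) * Real.log ((mRpow ρ β * mRpow σ (1 - β)).trace.re)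

/-- The α-escort matrix `ρ^{(α)} = ρ^α / Tr(ρ^α)`. -/
noncomputable def escort {m : Type*} [Fintype m] [DecidableEq m]
    (α : ℝ) (ρ : Matrix m m ℂ) : Matrix m m ℂ :=
  ((mRpow ρ α).trace)⁻¹ • mRpow ρ α

section Aux

variable {m : Type*} [Fintype m] [DecidableEq m]

lemma contOn_fin {s : Set ℝ} (hs : s.Finite) (f : ℝ → ℝ) : ContinuousOn f s :=
  hs.continuousOn f

lemma mRpow_eq_cfc {A : Matrix m m ℂ} (hA : A.IsHermitian) (r : ℝ) :
    mRpow A r = cfc (fun x : ℝ => x ^ r) A := by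
  rw [mRpow, dif_pos hA, hA.cfc_eq]
  rfl

lemma trace_conj_diag (U : Matrix.unitaryGroup m ℂ) (d : m → ℂ) :
    ((U : Matrix m m ℂ) * Matrix.diagonal d * star (U : Matrix m m ℂ)).trace = ∑ i, d i := by
  rw [Matrix.trace_mul_cycle, Unitary.star_mul_self_of_mem (SetLike.coe_mem U),
    one_mul, Matrix.trace_diagonal]

lemma trace_mRpow {A : Matrix m m ℂ} (hA : A.IsHermitian) (r : ℝ) :
    (mRpow A r).trace = ((∑ i, hA.eigenvalues i ^ r : ℝ) : ℂ) := by
  rw [mRpow, dif_pos hA, trace_conj_diag, Complex.ofReal_sum]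

lemma smul_conj_diag (U : Matrix m m ℂ) (d : m → ℂ) (c : ℂ) :
    c • (U * Matrix.diagonal d * star U) = U * Matrix.diagonal (fun i => c * d i) * star U := by
  rw [← smul_mul_assoc, ← mul_smul_comm, ← Matrix.diagonal_smul]
  rfl

lemma conj_diag_posSemidef (U : Matrix.unitaryGroup m ℂ) {d : m → ℂ} (hd : ∀ i, 0 ≤ d i) :
    ((U : Matrix m m ℂ) * Matrix.diagonal d * star (U : Matrix m m ℂ)).PosSemidef := by
  rw [Matrix.star_eq_conjTranspose]
  exact (Matrix.posSemidef_diagonal_iff.mpr hd).mul_mul_conjTranspose_same _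

omit [Fintype m] [DecidableEq m] in
lemma smul_real (c : ℝ) (X : Matrix m m ℂ) : ((c : ℂ)) • X = c • X := by
  ext i j
  simp [Complex.real_smul]

end Aux

/-- The escort matrices are density matrices, and the quantum relative α-entropy equals
the Petz–Rényi relative entropy of order `1/α` of the escort matrices:
`S_α(ρ‖σ) = D̂_{1/α}(ρ^{(α)} ‖ σ^{(α)})`. -/
theorem Salpha_eq_petzRenyi_escort {n : ℕ} (α : ℝ) (hα : 0 < α) (hα1 : α ≠ 1)
    (ρ σ : Matrix (Fin n) (Fin n) ℂ)
    (hρ : ρ.PosSemidef) (hρ1 : ρ.trace = 1)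
    (hσ : σ.PosDef) (hσ1 : σ.trace = 1) :
    ((escort α ρ).PosSemidef ∧ (escort α ρ).trace = 1) ∧
    ((escort α σ).PosSemidef ∧ (escort α σ).trace = 1) ∧
    Salpha α ρ σ = petzRenyi (1/α) (escort α ρ) (escort α σ) := by
  have hρH : ρ.IsHermitian := hρ.1
  have hσH : σ.IsHermitian := hσ.1
  have hα0 : α ≠ 0 := hα.ne'
  have hL : ∀ i, 0 ≤ hρH.eigenvalues i := fun i => hρ.eigenvalues_nonneg i
  have hM : ∀ i, 0 < hσH.eigenvalues i := fun i => hσ.eigenvalues_pos i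
  -- sums of eigenvalues are 1
  have hsum : ∀ (A : Matrix (Fin n) (Fin n) ℂ) (hA : A.IsHermitian), A.trace = 1 →
      ∑ i, hA.eigenvalues i = 1 := by
    intro A hA hA1
    have h1 : A.trace = ((∑ i, hA.eigenvalues i : ℝ) : ℂ) := by
      conv_lhs => rw [hA.spectral_theorem]
      rw [Unitary.conjStarAlgAut_apply, trace_conj_diag, Complex.ofReal_sum]
      rfl
    have := h1.symm.trans hA1
    exact_mod_cast this
  have hsumL : ∑ i, hρH.eigenvalues i = 1 := hsum ρ hρH hρ1
  have hsumM : ∑ i, hσH.eigenvalues i = 1 := hsum σ hσH hσ1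
  -- positivity of normalizing constants
  have hcρ : 0 < ∑ i, hρH.eigenvalues i ^ α := by
    obtain ⟨j, hj⟩ : ∃ j, hρH.eigenvalues j ≠ 0 := by
      by_contra h
      push_neg at h
      simp [h] at hsumL
    exact Finset.sum_pos' (fun i _ => Real.rpow_nonneg (hL i) α)
      ⟨j, Finset.mem_univ j, Real.rpow_pos_of_pos ((hL j).lt_of_ne (Ne.symm hj)) α⟩
  have hcσ : 0 < ∑ i, hσH.eigenvalues i ^ α := by
    obtain ⟨j, -⟩ : ∃ j : Fin n, hσH.eigenvalues j ≠ 0 := by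
      by_contra h
      push_neg at h
      simp [h] at hsumM
    exact Finset.sum_pos' (fun i _ => Real.rpow_nonneg (hM i).le α)
      ⟨j, Finset.mem_univ j, Real.rpow_pos_of_pos (hM j) α⟩
  set cρ : ℝ := ∑ i, hρH.eigenvalues i ^ α with hcρdef
  set cσ : ℝ := ∑ i, hσH.eigenvalues i ^ α with hcσdef
  -- spectra
  have hspρ : ∀ x ∈ spectrum ℝ ρ, ∃ i, hρH.eigenvalues i = x := by
    intro x hx
    rwa [hρH.spectrum_real_eq_range_eigenvalues] at hx
  have hspσ : ∀ x ∈ spectrum ℝ σ, ∃ i, hσH.eigenvalues i = x := by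
    intro x hx
    rwa [hσH.spectrum_real_eq_range_eigenvalues] at hx
  -- escorts as cfc
  have hescρ : escort α ρ = cfc (fun x : ℝ => cρ⁻¹ * x ^ α) ρ := by
    rw [escort, trace_mRpow hρH, mRpow_eq_cfc hρH, ← Complex.ofReal_inv, smul_real,
      ← cfc_const_mul _ _ ρ (contOn_fin Matrix.finite_real_spectrum _)]
  have hescσ : escort α σ = cfc (fun x : ℝ => cσ⁻¹ * x ^ α) σ := by
    rw [escort, trace_mRpow hσH, mRpow_eq_cfc hσH, ← Complex.ofReal_inv, smul_real,
      ← cfc_const_mul _ _ σ (contOn_fin Matrix.finite_real_spectrum _)]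
  have hescρH : (escort α ρ).IsHermitian := by
    rw [hescρ]; exact cfc_predicate _ ρ
  have hescσH : (escort α σ).IsHermitian := by
    rw [hescσ]; exact cfc_predicate _ σ
  -- key computations
  have keyρ : mRpow (escort α ρ) (1/α) = (cρ ^ (-(1/α)) : ℝ) • ρ := by
    rw [mRpow_eq_cfc hescρH, hescρ,
      ← cfc_comp (fun x : ℝ => x ^ (1/α)) (fun x : ℝ => cρ⁻¹ * x ^ α) ρ hρH.isSelfAdjoint
        (contOn_fin (Set.Finite.image _ Matrix.finite_real_spectrum) _) (contOn_fin Matrix.finite_real_spectrum _)]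
    rw [cfc_congr (g := fun x : ℝ => cρ ^ (-(1/α)) * x) ?_]
    · exact cfc_const_mul_id _ ρ hρH.isSelfAdjoint
    · intro x hx
      obtain ⟨i, rfl⟩ := hspρ x hx
      show (cρ⁻¹ * hρH.eigenvalues i ^ α) ^ (1/α) = cρ ^ (-(1/α)) * hρH.eigenvalues i
      rw [Real.mul_rpow (inv_nonneg.mpr hcρ.le) (Real.rpow_nonneg (hL i) α),
        Real.inv_rpow hcρ.le, ← Real.rpow_neg hcρ.le, ← Real.rpow_mul (hL i),
        mul_one_div_cancel hα0, Real.rpow_one]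
  have keyσ : mRpow (escort α σ) (1 - 1/α) = (cσ ^ ((1-α)/α) : ℝ) • mRpow σ (α - 1) := by
    rw [mRpow_eq_cfc hescσH, hescσ,
      ← cfc_comp (fun x : ℝ => x ^ (1 - 1/α)) (fun x : ℝ => cσ⁻¹ * x ^ α) σ hσH.isSelfAdjoint
        (contOn_fin (Set.Finite.image _ Matrix.finite_real_spectrum) _) (contOn_fin Matrix.finite_real_spectrum _)]
    rw [cfc_congr (g := fun x : ℝ => cσ ^ ((1-α)/α) * x ^ (α - 1)) ?_]
    · rw [cfc_const_mul _ _ σ (contOn_fin Matrix.finite_real_spectrum _), mRpow_eq_cfc hσH]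
    · intro x hx
      obtain ⟨i, rfl⟩ := hspσ x hx
      show (cσ⁻¹ * hσH.eigenvalues i ^ α) ^ (1 - 1/α)
        = cσ ^ ((1-α)/α) * hσH.eigenvalues i ^ (α - 1)
      rw [Real.mul_rpow (inv_nonneg.mpr hcσ.le) (Real.rpow_nonneg (hM i).le α),
        Real.inv_rpow hcσ.le, ← Real.rpow_neg hcσ.le, ← Real.rpow_mul (hM i).le]
      have e1 : -(1 - 1/α) = (1-α)/α := by field_simp; ring
      have e2 : α * (1 - 1/α) = α - 1 := by
        rw [mul_sub, mul_one, mul_one_div_cancel hα0]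
      rw [e1, e2]
  -- trace re values
  have hreρ : (mRpow ρ α).trace.re = cρ := by
    rw [trace_mRpow hρH]; exact Complex.ofReal_re _
  have hreσ : (mRpow σ α).trace.re = cσ := by
    rw [trace_mRpow hσH]; exact Complex.ofReal_re _
  -- positivity of Tr(ρ σ^{α-1})
  have hT : 0 < (ρ * mRpow σ (α - 1)).trace.re := by
    set V : Matrix (Fin n) (Fin n) ℂ := (hσH.eigenvectorUnitary : Matrix (Fin n) (Fin n) ℂ)
      with hV
    have hNps : (star V * ρ * V).PosSemidef := by
      rw [Matrix.star_eq_conjTranspose]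
      exact hρ.conjTranspose_mul_mul_same _
    have hdiag : ∀ i, 0 ≤ ((star V * ρ * V) i i).re ∧ ((star V * ρ * V) i i).im = 0 := by
      intro i
      have h := hNps.dotProduct_mulVec_nonneg (Pi.single i 1)
      have he : star (Pi.single i 1 : Fin n → ℂ) ⬝ᵥ ((star V * ρ * V) *ᵥ Pi.single i 1)
          = (star V * ρ * V) i i := by
        simp [dotProduct, Matrix.mulVec, Pi.single_apply, Finset.mul_sum]
      rw [he] at h
      exact ⟨(Complex.nonneg_iff.mp h).1, ((Complex.nonneg_iff.mp h).2).symm⟩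
    have htrN : ∑ i, ((star V * ρ * V) i i).re = 1 := by
      have h1 : (star V * ρ * V).trace = 1 := by
        rw [Matrix.trace_mul_cycle, Unitary.mul_star_self_of_mem (SetLike.coe_mem _), one_mul,
          hρ1]
      have := congrArg Complex.re h1
      simpa [Matrix.trace, Matrix.diag, Complex.re_sum] using this
    obtain ⟨j, hj⟩ : ∃ j, 0 < ((star V * ρ * V) j j).re := by
      by_contra h
      push_neg at h
      have h0 : ∀ i, ((star V * ρ * V) i i).re = 0 := fun i => le_antisymm (h i) (hdiag i).1
      simp [h0] at htrN
    have hTexpr : (ρ * mRpow σ (α - 1)).trace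
        = ∑ i, (star V * ρ * V) i i * ((hσH.eigenvalues i ^ (α - 1) : ℝ) : ℂ) := by
      rw [mRpow, dif_pos hσH, ← hV, ← mul_assoc, ← mul_assoc, Matrix.trace_mul_cycle,
        ← mul_assoc]
      simp [Matrix.trace, Matrix.diag, Matrix.mul_diagonal]
    rw [hTexpr, Complex.re_sum]
    have hterm : ∀ i, ((star V * ρ * V) i i * ((hσH.eigenvalues i ^ (α - 1) : ℝ) : ℂ)).re
        = ((star V * ρ * V) i i).re * hσH.eigenvalues i ^ (α - 1) := by
      intro i
      rw [Complex.mul_re, Complex.ofReal_re, Complex.ofReal_im, mul_zero, sub_zero]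
    simp only [hterm]
    exact Finset.sum_pos'
      (fun i _ => mul_nonneg (hdiag i).1 (Real.rpow_nonneg (hM i).le _))
      ⟨j, Finset.mem_univ j, mul_pos hj (Real.rpow_pos_of_pos (hM j) _)⟩
  -- density matrix properties of escorts
  have hesc : ∀ (A : Matrix (Fin n) (Fin n) ℂ) (hA : A.PosSemidef),
      0 < ∑ i, hA.1.eigenvalues i ^ α →
      (escort α A).PosSemidef ∧ (escort α A).trace = 1 := by
    intro A hA hc
    constructor
    · rw [escort, trace_mRpow hA.1, mRpow, dif_pos hA.1, smul_conj_diag]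
      refine conj_diag_posSemidef _ fun i => ?_
      rw [← Complex.ofReal_inv, ← Complex.ofReal_mul]
      simp only [Complex.nonneg_iff, Complex.ofReal_re, Complex.ofReal_im]
      exact ⟨mul_nonneg (inv_nonneg.mpr hc.le) (Real.rpow_nonneg (hA.eigenvalues_nonneg i) α),
        trivial⟩
    · rw [escort, Matrix.trace_smul, trace_mRpow hA.1, smul_eq_mul, inv_mul_cancel₀]
      exact Complex.ofReal_ne_zero.mpr hc.ne'
  -- the final identity
  refine ⟨hesc ρ hρ hcρ, hesc σ hσ.posSemidef hcσ, ?_⟩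
  rw [Salpha, petzRenyi, keyρ, keyσ, smul_mul_smul_comm, Matrix.trace_smul]
  rw [show ((cρ ^ (-(1/α)) * cσ ^ ((1-α)/α)) • (ρ * mRpow σ (α - 1)).trace).re
      = (cρ ^ (-(1/α)) * cσ ^ ((1-α)/α)) * (ρ * mRpow σ (α - 1)).trace.re from by
    rw [Complex.smul_re, smul_eq_mul]]
  rw [hreρ, hreσ]
  rw [Real.log_mul (mul_pos (Real.rpow_pos_of_pos hcρ _) (Real.rpow_pos_of_pos hcσ _)).ne'
    hT.ne', Real.log_mul (Real.rpow_pos_of_pos hcρ _).ne' (Real.rpow_pos_of_pos hcσ _).ne',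
    Real.log_rpow hcρ, Real.log_rpow hcσ]
  have h1α : (1 : ℝ) - α ≠ 0 := sub_ne_zero.mpr (Ne.symm hα1)
  have hdiv : 1/α - 1 = (1-α)/α := by
    rw [eq_div_iff hα0, sub_mul, one_div_mul_cancel hα0, one_mul]
  rw [hdiv, one_div_div]
  field_simp
  ring
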